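/- No-consistency example, key combinatorial claim: for every positive integer n and every finite list of real numbers x₁, …, x_n, there exist a positive integer k and a binary sequence a = (a₁, …, a_{2k}) ∈ {0,1}^{2k} containing exactly k ones and k zeros, such that the map g := ∑_{ℓ=1}^{2k} a_ℓ · 1_{[(ℓ−1)/k, ℓ/k]} satisfies g(x_i) = 0 for every i ∈ {1, …, n}. Consequently, since every such map g is a probability density supported in [0,2] (it is nonnegative with Lebesgue integral 1), for every finite sample there is a density in the countable class D that vanishes at every sampled point, so the importance-sampling estimate inf over D of the weighted empirical mean of any map f > 0 equals 0, while the true lower expectation inf_{P∈𝒫_D} E^P(f) is strictly positive. -/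

import Mathlib

open MeasureTheory
open scoped ENNReal

noncomputable section

/-- The step map `∑_{ℓ=1}^{2k} a_ℓ 1_{[(ℓ−1)/k, ℓ/k]}` determined by `k` and a sequence `a`
of length `2k` (indexed from `0` here). -/
def stepDensity (k : ℕ) (a : Fin (2 * k) → ℝ) : ℝ → ℝ := fun x =>
  ∑ ℓ : Fin (2 * k),
    a ℓ * Set.indicator (Set.Icc (((ℓ : ℕ) : ℝ) / k) ((((ℓ : ℕ) : ℝ) + 1) / k))
      (fun _ => (1 : ℝ)) x

/-- `a` is a binary sequence of even length `2k` (`k ≥ 1`) with the same number (`k`) of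
zeroes and ones. -/
def IsBi (k : ℕ) (a : Fin (2 * k) → ℝ) : Prop :=
  0 < k ∧ (∀ ℓ, a ℓ = 0 ∨ a ℓ = 1) ∧
    (Finset.univ.filter fun ℓ => a ℓ = 1).card = k

/-- The countable set `D` of step densities. -/
def stepDensitySet : Set (ℝ → ℝ) :=
  {g | ∃ k a, IsBi k a ∧ g = stepDensity k a}

/-- The density of the central uniform distribution on `[0,2]`. -/
def centralDensity : ℝ → ℝ :=
  Set.indicator (Set.Icc (0 : ℝ) 2) (fun _ => (1 / 2 : ℝ))

lemma isBi_nonneg {k a} (h : IsBi k a) (ℓ) : (0:ℝ) ≤ a ℓ := by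
  rcases h.2.1 ℓ with h | h <;> rw [h] <;> norm_num

lemma stepDensity_nonneg {k a} (h : IsBi k a) (y : ℝ) : 0 ≤ stepDensity k a y := by
  apply Finset.sum_nonneg
  intro ℓ _
  exact mul_nonneg (isBi_nonneg h ℓ) (Set.indicator_nonneg (fun _ _ => zero_le_one) y)

lemma stepDensity_support {k : ℕ} {a} (hk : 0 < k) (y : ℝ) (hy : y ∉ Set.Icc (0:ℝ) 2) :
    stepDensity k a y = 0 := by
  apply Finset.sum_eq_zero
  intro ℓ _
  have hkR : (0:ℝ) < k := by exact_mod_cast hk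
  rw [Set.indicator_of_notMem, mul_zero]
  intro ⟨h1, h2⟩
  apply hy
  constructor
  · exact le_trans (by positivity) h1
  · refine le_trans h2 ?_
    rw [div_le_iff₀ hkR]
    have : ((ℓ : ℕ) : ℝ) + 1 ≤ 2 * k := by
      have h := ℓ.2
      have : (ℓ : ℕ) + 1 ≤ 2 * k := h
      exact_mod_cast this
    linarith

lemma stepDensity_measurable (k : ℕ) (a : Fin (2 * k) → ℝ) :
    Measurable (stepDensity k a) := by
  apply Finset.measurable_sum
  intro ℓ _
  exact (measurable_const.indicator measurableSet_Icc).const_mul _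

lemma stepDensity_lintegral {k a} (h : IsBi k a) :
    ∫⁻ y, ENNReal.ofReal (stepDensity k a y) = 1 := by
  have hk := h.1
  have hkR : (0:ℝ) < k := by exact_mod_cast hk
  have key : ∀ y, ENNReal.ofReal (stepDensity k a y) =
      ∑ ℓ : Fin (2*k), Set.indicator (Set.Icc (((ℓ : ℕ) : ℝ) / k) ((((ℓ : ℕ) : ℝ) + 1) / k))
        (fun _ => ENNReal.ofReal (a ℓ)) y := by
    intro y
    rw [stepDensity, ENNReal.ofReal_sum_of_nonneg]
    · apply Finset.sum_congr rfl
      intro ℓ _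
      by_cases hy : y ∈ Set.Icc (((ℓ : ℕ) : ℝ) / k) ((((ℓ : ℕ) : ℝ) + 1) / k)
      · rw [Set.indicator_of_mem hy, Set.indicator_of_mem hy, mul_one]
      · rw [Set.indicator_of_notMem hy, Set.indicator_of_notMem hy, mul_zero,
          ENNReal.ofReal_zero]
    · intro ℓ _
      exact mul_nonneg (isBi_nonneg h ℓ) (Set.indicator_nonneg (fun _ _ => zero_le_one) y)
  simp only [key]
  rw [lintegral_finset_sum]
  · have : ∀ ℓ : Fin (2*k),
        (∫⁻ y, Set.indicator (Set.Icc (((ℓ : ℕ) : ℝ) / k) ((((ℓ : ℕ) : ℝ) + 1) / k))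
          (fun _ => ENNReal.ofReal (a ℓ)) y) = ENNReal.ofReal (a ℓ) * ENNReal.ofReal (1/k) := by
      intro ℓ
      rw [lintegral_indicator_const measurableSet_Icc, Real.volume_Icc]
      congr 1
      congr 1
      ring
    simp only [this, ← Finset.sum_mul]
    have hsum : (∑ ℓ : Fin (2*k), ENNReal.ofReal (a ℓ)) = k := by
      have : ∀ ℓ : Fin (2*k), ENNReal.ofReal (a ℓ) = if a ℓ = 1 then 1 else 0 := by
        intro ℓ
        rcases h.2.1 ℓ with h0 | h1
        · rw [h0, if_neg (by norm_num), ENNReal.ofReal_zero]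
        · rw [h1, if_pos rfl, ENNReal.ofReal_one]
      simp only [this]
      rw [Finset.sum_boole]
      exact_mod_cast congrArg (Nat.cast : ℕ → ℝ≥0∞) h.2.2
    rw [hsum]
    rw [one_div, ENNReal.ofReal_inv_of_pos hkR, ENNReal.ofReal_natCast]
    exact ENNReal.mul_inv_cancel (by exact_mod_cast hk.ne') (by simp)
  · intro ℓ _
    exact measurable_const.indicator measurableSet_Icc

lemma card_mem_interval_le_two (k : ℕ) (hk : 0 < k) (y : ℝ) :
    (Finset.univ.filter
      (fun ℓ : Fin (2*k) => y ∈ Set.Icc (((ℓ : ℕ) : ℝ) / k) ((((ℓ : ℕ) : ℝ) + 1) / k))).card ≤ 2 := by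
  have hmain : (Finset.univ.filter
      (fun ℓ : Fin (2*k) => y ∈ Set.Icc (((ℓ : ℕ) : ℝ) / k) ((((ℓ : ℕ) : ℝ) + 1) / k))).card
      ≤ ({⌊(k : ℝ) * y⌋, ⌊(k : ℝ) * y⌋ - 1} : Finset ℤ).card := by
    apply Finset.card_le_card_of_injOn (fun ℓ : Fin (2*k) => ((ℓ : ℕ) : ℤ))
    · intro ℓ hℓ
      rw [Finset.mem_coe, Finset.mem_filter] at hℓ
      obtain ⟨-, h1, h2⟩ := hℓ
      have hkR : (0:ℝ) < k := by exact_mod_cast hk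
      rw [div_le_iff₀ hkR] at h1
      rw [le_div_iff₀ hkR] at h2
      have hle : ((ℓ : ℕ) : ℤ) ≤ ⌊(k : ℝ) * y⌋ := by
        apply Int.le_floor.2
        push_cast
        linarith [mul_comm y (k:ℝ)]
      have hge : ⌊(k : ℝ) * y⌋ ≤ ((ℓ : ℕ) : ℤ) + 1 := by
        have : (k : ℝ) * y ≤ (((ℓ : ℕ) : ℤ) + 1 : ℤ) := by push_cast; linarith
        calc ⌊(k : ℝ) * y⌋ ≤ ⌊((((ℓ : ℕ) : ℤ) + 1 : ℤ) : ℝ)⌋ := Int.floor_le_floor this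
        _ = ((ℓ : ℕ) : ℤ) + 1 := Int.floor_intCast _
      simp only [Finset.mem_coe, Finset.mem_insert, Finset.mem_singleton]
      omega
    · intro a _ b _ hab
      simp only at hab
      have : (a : ℕ) = (b : ℕ) := by exact_mod_cast hab
      exact Fin.ext this
  calc _ ≤ _ := hmain
  _ ≤ 2 := Finset.card_insert_le _ _ |>.trans (by simp)


lemma exists_vanishing (n : ℕ) (hn : 0 < n) (x : Fin n → ℝ) :
    ∃ (k : ℕ) (a : Fin (2 * k) → ℝ), IsBi k a ∧ ∀ i, stepDensity k a (x i) = 0 := by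
  set k := 2 * n with hk
  have hkpos : 0 < k := by omega
  set B : Finset (Fin (2 * k)) := Finset.univ.filter
    (fun ℓ => ∃ i, x i ∈ Set.Icc (((ℓ : ℕ) : ℝ) / k) ((((ℓ : ℕ) : ℝ) + 1) / k)) with hB
  have hBcard : B.card ≤ 2 * n := by
    have hsub : B ⊆ Finset.univ.biUnion (fun i : Fin n => Finset.univ.filter
        (fun ℓ : Fin (2*k) => x i ∈ Set.Icc (((ℓ : ℕ) : ℝ) / k) ((((ℓ : ℕ) : ℝ) + 1) / k))) := by
      intro ℓ hℓ
      rw [hB, Finset.mem_filter] at hℓ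
      obtain ⟨-, i, hi⟩ := hℓ
      exact Finset.mem_biUnion.2 ⟨i, Finset.mem_univ i, Finset.mem_filter.2 ⟨Finset.mem_univ _, hi⟩⟩
    calc B.card ≤ _ := Finset.card_le_card hsub
    _ ≤ ∑ i : Fin n, (Finset.univ.filter
        (fun ℓ : Fin (2*k) => x i ∈ Set.Icc (((ℓ : ℕ) : ℝ) / k) ((((ℓ : ℕ) : ℝ) + 1) / k))).card :=
      Finset.card_biUnion_le
    _ ≤ ∑ i : Fin n, 2 := by
      apply Finset.sum_le_sum
      intro i _
      exact card_mem_interval_le_two k hkpos (x i)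
    _ = 2 * n := by simp [mul_comm]
  have hGcard : k ≤ (Finset.univ \ B : Finset (Fin (2*k))).card := by
    have := Finset.card_sdiff_of_subset (Finset.subset_univ B)
    rw [this, Finset.card_univ, Fintype.card_fin]
    omega
  obtain ⟨t, htsub, htcard⟩ := Finset.exists_subset_card_eq hGcard
  refine ⟨k, fun ℓ => if ℓ ∈ t then 1 else 0, ⟨hkpos, ?_, ?_⟩, ?_⟩
  · intro ℓ
    by_cases h : ℓ ∈ t <;> simp [h]
  · have heq : (Finset.univ.filter (fun ℓ : Fin (2*k) =>
        (if ℓ ∈ t then (1:ℝ) else 0) = 1)) = t := by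
      ext ℓ
      simp only [Finset.mem_filter, Finset.mem_univ, true_and]
      by_cases h : ℓ ∈ t <;> simp [h]
    rw [heq]
    exact htcard
  · intro i
    apply Finset.sum_eq_zero
    intro ℓ _
    by_cases h : ℓ ∈ t
    · have hnb : ℓ ∉ B := by
        have := htsub h
        rw [Finset.mem_sdiff] at this
        exact this.2
      rw [hB, Finset.mem_filter] at hnb
      push_neg at hnb
      rw [Set.indicator_of_notMem (hnb (Finset.mem_univ ℓ) i), mul_zero]
    · simp [h]

lemma stepDensity_le_two {k a} (h : IsBi k a) (y : ℝ) : stepDensity k a y ≤ 2 := by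
  have hk := h.1
  calc stepDensity k a y
      ≤ ∑ ℓ : Fin (2*k), Set.indicator (Set.Icc (((ℓ : ℕ) : ℝ) / k) ((((ℓ : ℕ) : ℝ) + 1) / k))
        (fun _ => (1 : ℝ)) y := by
        apply Finset.sum_le_sum
        intro ℓ _
        rcases h.2.1 ℓ with h0 | h1
        · rw [h0, zero_mul]
          exact Set.indicator_nonneg (fun _ _ => zero_le_one) y
        · rw [h1, one_mul]
    _ = ∑ ℓ ∈ Finset.univ.filter
          (fun ℓ : Fin (2*k) => y ∈ Set.Icc (((ℓ : ℕ) : ℝ) / k) ((((ℓ : ℕ) : ℝ) + 1) / k)),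
          (1 : ℝ) := by
        rw [Finset.sum_filter]
        apply Finset.sum_congr rfl
        intro ℓ _
        by_cases hy : y ∈ Set.Icc (((ℓ : ℕ) : ℝ) / k) ((((ℓ : ℕ) : ℝ) + 1) / k)
        · rw [Set.indicator_of_mem hy, if_pos hy]
        · rw [Set.indicator_of_notMem hy, if_neg hy]
    _ = ((Finset.univ.filter
          (fun ℓ : Fin (2*k) => y ∈ Set.Icc (((ℓ : ℕ) : ℝ) / k) ((((ℓ : ℕ) : ℝ) + 1) / k))).card : ℝ) := by
        rw [Finset.sum_const, nsmul_eq_mul, mul_one]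
    _ ≤ 2 := by exact_mod_cast card_mem_interval_le_two k hk y

lemma stepDensity_zero_of_lt_one {k a} (h : IsBi k a) (y : ℝ) (hy : stepDensity k a y < 1) :
    stepDensity k a y = 0 := by
  by_contra hne
  have hpos : 0 < stepDensity k a y := lt_of_le_of_ne (stepDensity_nonneg h y) (Ne.symm hne)
  obtain ⟨ℓ, -, hℓ⟩ := Finset.exists_ne_zero_of_sum_ne_zero (by
    rw [← stepDensity]; exact hne : (∑ ℓ : Fin (2*k),
      a ℓ * Set.indicator (Set.Icc (((ℓ : ℕ) : ℝ) / k) ((((ℓ : ℕ) : ℝ) + 1) / k))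
        (fun _ => (1 : ℝ)) y) ≠ 0)
  have hterm : a ℓ * Set.indicator (Set.Icc (((ℓ : ℕ) : ℝ) / k) ((((ℓ : ℕ) : ℝ) + 1) / k))
      (fun _ => (1 : ℝ)) y = 1 := by
    rcases h.2.1 ℓ with h0 | h1
    · exact absurd (by rw [h0, zero_mul]) hℓ
    · rw [h1, one_mul] at hℓ ⊢
      by_cases hy' : y ∈ Set.Icc (((ℓ : ℕ) : ℝ) / k) ((((ℓ : ℕ) : ℝ) + 1) / k)
      · exact Set.indicator_of_mem hy' _
      · exact absurd (Set.indicator_of_notMem hy' _) hℓ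
  have : (1:ℝ) ≤ stepDensity k a y := by
    rw [← hterm]
    apply Finset.single_le_sum (f := fun ℓ : Fin (2*k) =>
      a ℓ * Set.indicator (Set.Icc (((ℓ : ℕ) : ℝ) / k) ((((ℓ : ℕ) : ℝ) + 1) / k))
        (fun _ => (1 : ℝ)) y) _ (Finset.mem_univ ℓ)
    intro j _
    exact mul_nonneg (isBi_nonneg h j) (Set.indicator_nonneg (fun _ _ => zero_le_one) y)
  linarith

lemma measure_T {k a} (h : IsBi k a) :
    MeasurableSet {y : ℝ | 1 ≤ stepDensity k a y} ∧
    {y : ℝ | 1 ≤ stepDensity k a y} ⊆ Set.Icc (0:ℝ) 2 ∧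
    2⁻¹ ≤ volume {y : ℝ | 1 ≤ stepDensity k a y} := by
  set T := {y : ℝ | 1 ≤ stepDensity k a y} with hT
  have hmeas : MeasurableSet T := measurableSet_le measurable_const (stepDensity_measurable k a)
  have hsub : T ⊆ Set.Icc (0:ℝ) 2 := by
    intro y hy
    by_contra hout
    have := stepDensity_support (a := a) h.1 y hout
    have h1 : (1:ℝ) ≤ stepDensity k a y := hy
    rw [this] at h1
    linarith
  refine ⟨hmeas, hsub, ?_⟩
  have hzero : ∀ y, y ∉ T → stepDensity k a y = 0 := by
    intro y hy
    exact stepDensity_zero_of_lt_one h y (by simpa [hT] using hy)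
  have key : (1 : ℝ≥0∞) ≤ 2 * volume T := by
    calc (1 : ℝ≥0∞) = ∫⁻ y, ENNReal.ofReal (stepDensity k a y) := (stepDensity_lintegral h).symm
    _ = ∫⁻ y, T.indicator (fun y => ENNReal.ofReal (stepDensity k a y)) y := by
        apply lintegral_congr
        intro y
        by_cases hy : y ∈ T
        · rw [Set.indicator_of_mem hy]
        · rw [Set.indicator_of_notMem hy, hzero y hy, ENNReal.ofReal_zero]
    _ = ∫⁻ y in T, ENNReal.ofReal (stepDensity k a y) := lintegral_indicator hmeas _
    _ ≤ ∫⁻ _ in T, (2:ℝ≥0∞) := by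
        apply lintegral_mono
        intro y
        calc ENNReal.ofReal (stepDensity k a y) ≤ ENNReal.ofReal 2 :=
          ENNReal.ofReal_le_ofReal (stepDensity_le_two h y)
        _ = 2 := by norm_num
    _ = 2 * volume T := by rw [setLIntegral_const]
  calc (2 : ℝ≥0∞)⁻¹ = 2⁻¹ * 1 := by rw [mul_one]
  _ ≤ 2⁻¹ * (2 * volume T) := by exact mul_le_mul_right key _
  _ = volume T := by
      rw [← mul_assoc, ENNReal.inv_mul_cancel (by norm_num) (by norm_num), one_mul]

lemma uniform_lower_bound (f : ℝ → ℝ) (hf : Measurable f) (hfpos : ∀ y, 0 < f y) :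
    ∃ ε : ℝ≥0∞, 0 < ε ∧ ∀ k (a : Fin (2*k) → ℝ), IsBi k a →
      ε ≤ ∫⁻ y, ENNReal.ofReal (f y * stepDensity k a y) := by
  set A : ℕ → Set ℝ := fun m => Set.Icc (0:ℝ) 2 ∩ f ⁻¹' Set.Ici (1/(m+1)) with hA
  have hAmeas : ∀ m, MeasurableSet (A m) := fun m =>
    measurableSet_Icc.inter (hf measurableSet_Ici)
  have hAmono : Monotone A := by
    intro m m' hmm
    apply Set.inter_subset_inter_right
    apply Set.preimage_mono
    apply Set.Ici_subset_Ici.2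
    apply div_le_div_of_nonneg_left zero_le_one (by positivity)
    exact_mod_cast Nat.succ_le_succ hmm
  have hAunion : (⋃ m, A m) = Set.Icc (0:ℝ) 2 := by
    apply Set.Subset.antisymm
    · exact Set.iUnion_subset fun m => Set.inter_subset_left
    · intro y hy
      obtain ⟨m, hm⟩ := exists_nat_gt (f y)⁻¹
      refine Set.mem_iUnion.2 ⟨m, hy, ?_⟩
      have hfy := hfpos y
      have hm1 : (f y)⁻¹ < (m:ℝ) + 1 := lt_trans hm (by linarith)
      have : 1 / ((m:ℝ) + 1) < f y := by
        rw [div_lt_iff₀ (by positivity)]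
        rw [inv_lt_iff_one_lt_mul₀ hfy] at hm1
        linarith [hm1]
      exact le_of_lt this
  have htend := MeasureTheory.tendsto_measure_iUnion_atTop (μ := volume) hAmono
  rw [hAunion, Real.volume_Icc] at htend
  have h2 : ENNReal.ofReal (2 - 0) = 2 := by norm_num
  rw [h2] at htend
  obtain ⟨m, hm⟩ := (htend.eventually (eventually_gt_nhds (by rw [ENNReal.div_lt_iff (by norm_num) (by norm_num)]; norm_num : (3/2:ℝ≥0∞) < 2))).exists
  simp only [Function.comp] at hm
  set c : ℝ := 1/((m:ℝ)+1) with hc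
  have hcpos : 0 < c := by positivity
  refine ⟨ENNReal.ofReal c * (volume (A m) - 3/2), ?_, ?_⟩
  · apply ENNReal.mul_pos
    · exact (ENNReal.ofReal_pos.2 hcpos).ne'
    · rw [← pos_iff_ne_zero]
      exact tsub_pos_iff_lt.2 hm
  · intro k a hBi
    obtain ⟨hTmeas, hTsub, hTvol⟩ := measure_T hBi
    set T := {y : ℝ | 1 ≤ stepDensity k a y} with hT
    have hTtop : volume T ≠ ⊤ := by
      apply ne_of_lt
      calc volume T ≤ volume (Set.Icc (0:ℝ) 2) := measure_mono hTsub
      _ < ⊤ := by rw [Real.volume_Icc]; exact ENNReal.ofReal_lt_top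
    -- μ (A m \ T) ≤ 3/2
    have hdiff : volume (A m \ T) ≤ 3/2 := by
      calc volume (A m \ T) ≤ volume (Set.Icc (0:ℝ) 2 \ T) :=
        measure_mono (Set.diff_subset_diff_left Set.inter_subset_left)
      _ = volume (Set.Icc (0:ℝ) 2) - volume T :=
        measure_diff hTsub hTmeas.nullMeasurableSet hTtop
      _ ≤ 2 - 2⁻¹ := by
          rw [Real.volume_Icc]
          rw [h2]
          exact tsub_le_tsub_left hTvol 2
      _ = 3/2 := by
          rw [ENNReal.sub_eq_of_eq_add (by norm_num)]
          rw [← one_div, ENNReal.div_add_div_same,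
            ENNReal.eq_div_iff (by norm_num) (by norm_num)]
          norm_num
    have hS : volume (A m) - 3/2 ≤ volume (A m ∩ T) := by
      rw [tsub_le_iff_right]
      calc volume (A m) ≤ volume (A m ∩ T) + volume (A m \ T) :=
        measure_le_inter_add_diff _ _ _
      _ ≤ volume (A m ∩ T) + 3/2 := add_le_add_right hdiff _
    calc ENNReal.ofReal c * (volume (A m) - 3/2)
        ≤ ENNReal.ofReal c * volume (A m ∩ T) := mul_le_mul_right hS _
    _ = ∫⁻ y, (A m ∩ T).indicator (fun _ => ENNReal.ofReal c) y :=
        (lintegral_indicator_const ((hAmeas m).inter hTmeas) _).symm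
    _ ≤ ∫⁻ y, ENNReal.ofReal (f y * stepDensity k a y) := by
        apply lintegral_mono
        intro y
        by_cases hy : y ∈ A m ∩ T
        · rw [Set.indicator_of_mem hy]
          apply ENNReal.ofReal_le_ofReal
          have hfy : c ≤ f y := hy.1.2
          have hgy : (1:ℝ) ≤ stepDensity k a y := hy.2
          calc c ≤ f y := hfy
          _ = f y * 1 := (mul_one _).symm
          _ ≤ f y * stepDensity k a y :=
            mul_le_mul_of_nonneg_left hgy (le_of_lt (hfpos y))
        · rw [Set.indicator_of_notMem hy]
          exact zero_le

/-- **No consistency.** Every member of `D` is a probability density supported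
in `[0,2]`; for every finite sample `x₁, …, x_n` there are `k` and a binary sequence
`a ∈ Bi` whose step density vanishes at all sampled points; consequently, for every
Borel measurable `f > 0`, the importance-sampling estimate `inf_{g∈D}` of the weighted
empirical mean is `0`, while the true lower expectation `inf_{g∈D} ∫ f·g` is strictly
positive. -/
theorem no_consistency_example :
    (∀ (k : ℕ) (a : Fin (2 * k) → ℝ), IsBi k a →
      (∀ y, 0 ≤ stepDensity k a y) ∧
      (∀ y, y ∉ Set.Icc (0 : ℝ) 2 → stepDensity k a y = 0) ∧
      ∫⁻ y, ENNReal.ofReal (stepDensity k a y) = 1) ∧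
    ∀ n : ℕ, 0 < n → ∀ x : Fin n → ℝ,
      (∃ (k : ℕ) (a : Fin (2 * k) → ℝ), IsBi k a ∧
        ∀ i, stepDensity k a (x i) = 0) ∧
      (∀ f : ℝ → ℝ, Measurable f → (∀ y, 0 < f y) →
        (⨅ g : stepDensitySet,
          (n : ℝ)⁻¹ * ∑ i, f (x i) * g.1 (x i) / centralDensity (x i)) = 0 ∧
        0 < ⨅ g : stepDensitySet, ∫⁻ y, ENNReal.ofReal (f y * g.1 y)) := by
  constructor
  · intro k a h
    exact ⟨stepDensity_nonneg h, fun y hy => stepDensity_support (a := a) h.1 y hy,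
      stepDensity_lintegral h⟩
  · intro n hn x
    refine ⟨exists_vanishing n hn x, ?_⟩
    intro f hf hfpos
    have hnonneg : ∀ g : stepDensitySet,
        0 ≤ (n : ℝ)⁻¹ * ∑ i, f (x i) * g.1 (x i) / centralDensity (x i) := by
      rintro ⟨g, k, a, hBi, rfl⟩
      apply mul_nonneg (by positivity)
      apply Finset.sum_nonneg
      intro i _
      apply div_nonneg
      · exact mul_nonneg (hfpos (x i)).le (stepDensity_nonneg hBi (x i))
      · exact Set.indicator_nonneg (fun _ _ => by norm_num) _
    constructor
    · obtain ⟨k0, a0, hBi0, hvan⟩ := exists_vanishing n hn x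
      set g0 : stepDensitySet := ⟨stepDensity k0 a0, ⟨k0, a0, hBi0, rfl⟩⟩ with hg0
      haveI : Nonempty ↥stepDensitySet := ⟨g0⟩
      apply le_antisymm
      · have hbdd : BddBelow (Set.range fun g : stepDensitySet =>
            (n : ℝ)⁻¹ * ∑ i, f (x i) * g.1 (x i) / centralDensity (x i)) := by
          refine ⟨0, ?_⟩
          rintro b ⟨g, rfl⟩
          exact hnonneg g
        calc (⨅ g : stepDensitySet,
              (n : ℝ)⁻¹ * ∑ i, f (x i) * g.1 (x i) / centralDensity (x i))
            ≤ (n : ℝ)⁻¹ * ∑ i, f (x i) * g0.1 (x i) / centralDensity (x i) :=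
              ciInf_le hbdd g0
        _ = 0 := by
            have : ∀ i, f (x i) * g0.1 (x i) / centralDensity (x i) = 0 := by
              intro i
              show f (x i) * stepDensity k0 a0 (x i) / centralDensity (x i) = 0
              rw [hvan i, mul_zero, zero_div]
            rw [Finset.sum_congr rfl (fun i _ => this i), Finset.sum_const_zero, mul_zero]
      · exact le_ciInf hnonneg
    · obtain ⟨ε, hε, hεle⟩ := uniform_lower_bound f hf hfpos
      refine lt_of_lt_of_le hε (le_iInf ?_)
      rintro ⟨g, k, a, hBi, rfl⟩
      exact hεle k a hBi
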